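/- Let 𝓛 be a concept class over a universe X that is intersection-closed (the intersection of any non-empty family of concepts in 𝓛 is again a concept in 𝓛). Then I′(𝓛) = PBTD⁺(𝓛) = I(𝓛). -/
import Mathlib


namespace PBT

variable {X : Type*}

/-- A set `L ⊆ X` is consistent with a set `T` of labeled examples
(label `true` = “+”, label `false` = “−”). -/
def Consistent (L : Set X) (T : Set (X × Bool)) : Prop :=
  ∀ p ∈ T, (p.2 = true → p.1 ∈ L) ∧ (p.2 = false → p.1 ∉ L)

/-- `T` is a teaching set for `L` w.r.t. the concept class `𝓛`:
`L` is the only concept in `𝓛` that is consistent with `T`. -/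
def IsTeachingSet (𝓛 : Set (Set X)) (L : Set X) (T : Set (X × Bool)) : Prop :=
  Consistent L T ∧ ∀ L' ∈ 𝓛, Consistent L' T → L' = L

/-- `TD L 𝓛`: least size of a finite teaching set for `L` w.r.t. `𝓛` (`⊤` if none exists). -/
noncomputable def TD (L : Set X) (𝓛 : Set (Set X)) : ℕ∞ :=
  sInf {n : ℕ∞ | ∃ T : Finset (X × Bool), IsTeachingSet 𝓛 L ↑T ∧ n = T.card}

/-- A positive teaching set, identified with its set of (positively labeled) points. -/
def IsPosTeachingSet (𝓛 : Set (Set X)) (L : Set X) (S : Set X) : Prop :=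
  S ⊆ L ∧ ∀ L' ∈ 𝓛, S ⊆ L' → L' = L

/-- least size of a finite positive teaching set for `L` w.r.t. `𝓛` (`⊤` if none exists). -/
noncomputable def TDpos (L : Set X) (𝓛 : Set (Set X)) : ℕ∞ :=
  sInf {n : ℕ∞ | ∃ S : Finset X, IsPosTeachingSet 𝓛 L ↑S ∧ n = S.card}

/-- A strict partial order (preference relation) on concepts:
`pr L' L` means `L` is strictly preferred over `L'`. -/
def StrictPO (pr : Set X → Set X → Prop) : Prop :=
  (∀ A, ¬ pr A A) ∧ ∀ A B C : Set X, pr A B → pr B C → pr A C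

/-- `PBTDord 𝓛 pr = sup_{L ∈ 𝓛} TD(L, 𝓛 \ {L' ∈ 𝓛 | pr L' L})`. -/
noncomputable def PBTDord (𝓛 : Set (Set X)) (pr : Set X → Set X → Prop) : ℕ∞ :=
  ⨆ L ∈ 𝓛, TD L {L' ∈ 𝓛 | ¬ pr L' L}

/-- preference-based teaching dimension of `𝓛`. -/
noncomputable def PBTD (𝓛 : Set (Set X)) : ℕ∞ :=
  sInf {v : ℕ∞ | ∃ pr, StrictPO pr ∧ v = PBTDord 𝓛 pr}

/-- `PBTDposOrd 𝓛 pr = sup_{L ∈ 𝓛} TD⁺(L, 𝓛 \ {L' ∈ 𝓛 | pr L' L})`. -/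
noncomputable def PBTDposOrd (𝓛 : Set (Set X)) (pr : Set X → Set X → Prop) : ℕ∞ :=
  ⨆ L ∈ 𝓛, TDpos L {L' ∈ 𝓛 | ¬ pr L' L}

/-- positive preference-based teaching dimension of `𝓛`. -/
noncomputable def PBTDpos (𝓛 : Set (Set X)) : ℕ∞ :=
  sInf {v : ℕ∞ | ∃ pr, StrictPO pr ∧ v = PBTDposOrd 𝓛 pr}


/-- `I(𝓛)`: the smallest `k` such that every `L ∈ 𝓛` has a spanning set of size `≤ k`. -/
noncomputable def Ispan (𝓛 : Set (Set X)) : ℕ∞ :=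
  sInf {k : ℕ∞ | ∀ L ∈ 𝓛, ∃ S : Finset X, ↑S ⊆ L ∧
    (∀ L' ∈ 𝓛, ↑S ⊆ L' → L ⊆ L') ∧ (S.card : ℕ∞) ≤ k}

/-- `I′(𝓛)`: the smallest `k` such that every `L ∈ 𝓛` has a weak spanning set of size `≤ k`. -/
noncomputable def Iweak (𝓛 : Set (Set X)) : ℕ∞ :=
  sInf {k : ℕ∞ | ∀ L ∈ 𝓛, ∃ S : Finset X, ↑S ⊆ L ∧
    (∀ L' ∈ 𝓛, L' ⊂ L → ¬ ↑S ⊆ L') ∧ (S.card : ℕ∞) ≤ k}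

lemma exists_pos_teaching {X : Type*} {𝓒 : Set (Set X)} {L : Set X} {v : ℕ∞} (hv : v ≠ ⊤)
    (h : TDpos L 𝓒 ≤ v) :
    ∃ S : Finset X, IsPosTeachingSet 𝓒 L ↑S ∧ (S.card : ℕ∞) ≤ v := by
  set A := {n : ℕ∞ | ∃ S : Finset X, IsPosTeachingSet 𝓒 L ↑S ∧ n = S.card} with hA
  have hTD : TDpos L 𝓒 = sInf A := rfl
  have hne : A.Nonempty := by
    by_contra hA0
    rw [Set.not_nonempty_iff_eq_empty] at hA0
    rw [hTD, hA0, sInf_empty] at h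
    exact hv (top_le_iff.mp h)
  obtain ⟨n, hnA, hmin⟩ := wellFounded_lt.has_min A hne
  obtain ⟨S, hS, rfl⟩ := hnA
  have hlb : (S.card : ℕ∞) ≤ sInf A := le_sInf fun b hb => not_lt.mp (hmin b hb)
  exact ⟨S, hS, hlb.trans (hTD ▸ h)⟩

/-- Core lower bound: for intersection-closed classes, any strict preference order
gives spanning sets of size at most `PBTDposOrd`. -/
lemma Ispan_le_PBTDposOrd {X : Type*} {𝓛 : Set (Set X)}
    (hcap : ∀ 𝓕 ⊆ 𝓛, 𝓕.Nonempty → ⋂₀ 𝓕 ∈ 𝓛)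
    {pr : Set X → Set X → Prop} (hpr : StrictPO pr) :
    Ispan 𝓛 ≤ PBTDposOrd 𝓛 pr := by
  set v := PBTDposOrd 𝓛 pr with hv
  rcases eq_or_ne v ⊤ with hvt | hvt
  · exact hvt ▸ le_top
  refine sInf_le ?_
  intro L hL
  have hTD : ∀ M ∈ 𝓛, TDpos M {L' ∈ 𝓛 | ¬ pr L' M} ≤ v := by
    intro M hM
    exact le_iSup₂_of_le M hM le_rfl
  obtain ⟨S, ⟨hSL, hSteach⟩, hScard⟩ := exists_pos_teaching hvt (hTD L hL)
  refine ⟨S, hSL, ?_, hScard⟩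
  -- the closure of S
  set 𝓕 := {L' ∈ 𝓛 | ↑S ⊆ L'} with h𝓕
  have h𝓕sub : 𝓕 ⊆ 𝓛 := fun A hA => hA.1
  have hL𝓕 : L ∈ 𝓕 := ⟨hL, hSL⟩
  set M := ⋂₀ 𝓕 with hM
  have hM𝓛 : M ∈ 𝓛 := hcap 𝓕 h𝓕sub ⟨L, hL𝓕⟩
  have hSM : ↑S ⊆ M := Set.subset_sInter fun A hA => hA.2
  have hML : M ⊆ L := Set.sInter_subset_of_mem hL𝓕
  have hMeqL : M = L := by
    by_cases hp : pr M L
    · -- use the teaching set of M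
      obtain ⟨T, ⟨hTM, hTteach⟩, _⟩ := exists_pos_teaching hvt (hTD M hM𝓛)
      have hnp : ¬ pr L M := fun hq => hpr.1 M (hpr.2 M L M hp hq)
      exact (hTteach L ⟨hL, hnp⟩ (hTM.trans hML)).symm
    · exact hSteach M ⟨hM𝓛, hp⟩ hSM
  intro L' hL' hSL'
  exact hMeqL ▸ Set.sInter_subset_of_mem (t := L') ⟨hL', hSL'⟩

theorem intersection_closed_span {X : Type*} (𝓛 : Set (Set X))
    (hcap : ∀ 𝓕 ⊆ 𝓛, 𝓕.Nonempty → ⋂₀ 𝓕 ∈ 𝓛) :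
    Iweak 𝓛 = PBTDpos 𝓛 ∧ PBTDpos 𝓛 = Ispan 𝓛 := by
  -- Step 1: PBTDpos ≤ Ispan, using the preference "strictly smaller is preferred".
  have hpr : StrictPO (fun A B : Set X => B ⊂ A) :=
    ⟨fun A h => h.2 h.1, fun A B C h1 h2 => h2.trans h1⟩
  have h1 : PBTDpos 𝓛 ≤ Ispan 𝓛 := by
    refine le_sInf ?_
    intro k hk
    refine le_trans (sInf_le ⟨_, hpr, rfl⟩) ?_
    refine iSup₂_le ?_
    intro L hL
    obtain ⟨S, hSL, hSspan, hScard⟩ := hk L hL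
    refine le_trans (sInf_le ⟨S, ⟨hSL, ?_⟩, rfl⟩) hScard
    intro L' hL' hSL'
    have hLL' : L ⊆ L' := hSspan L' hL'.1 hSL'
    by_contra hne
    exact hL'.2 ⟨hLL', fun h => hne (le_antisymm h hLL')⟩
  -- Step 2: Ispan ≤ PBTDpos.
  have h2 : Ispan 𝓛 ≤ PBTDpos 𝓛 := by
    refine le_sInf ?_
    rintro v ⟨pr, hpr', rfl⟩
    exact Ispan_le_PBTDposOrd hcap hpr'
  have h3 : PBTDpos 𝓛 = Ispan 𝓛 := le_antisymm h1 h2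
  -- Step 3: Iweak = Ispan since spanning and weak spanning coincide for
  -- intersection-closed classes.
  have h4 : Iweak 𝓛 = Ispan 𝓛 := by
    apply le_antisymm
    · -- spanning sets are weak spanning sets
      refine sInf_le_sInf ?_
      intro k hk L hL
      obtain ⟨S, hSL, hSspan, hScard⟩ := hk L hL
      refine ⟨S, hSL, ?_, hScard⟩
      intro L' hL' hsub hSL'
      exact hsub.2 (hSspan L' hL' hSL')
    · -- weak spanning sets are spanning sets (intersection-closedness)
      refine sInf_le_sInf ?_
      intro k hk L hL
      obtain ⟨S, hSL, hSweak, hScard⟩ := hk L hL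
      refine ⟨S, hSL, ?_, hScard⟩
      intro L' hL' hSL'
      have hcap2 : L ∩ L' ∈ 𝓛 := by
        have := hcap {L, L'} (by rintro A (rfl | rfl) <;> assumption) ⟨L, by simp⟩
        simpa using this
      by_contra hnsub
      refine hSweak (L ∩ L') hcap2 ⟨Set.inter_subset_left, ?_⟩
        (Set.subset_inter hSL hSL')
      intro hsub
      exact hnsub fun x hx => ((hsub hx).2)
  exact ⟨h4.trans h3.symm, h3⟩

end PBT
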